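/- If H has finite Littlestone dimension d = LD(H), then the clique dimension satisfies CD(H) ≤ max{ 2·d·log₂(d), 300 }. -/

import Mathlib

open MeasureTheory
open scoped ENNReal

namespace ContradictionGraph

variable {X : Type*}

/-- A hypothesis `h : X → Bool` is consistent with the dataset `S` of size `m` if it labels
every example in `S` correctly. -/
def Consistent (h : X → Bool) {m : ℕ} (S : Fin m → X × Bool) : Prop :=
  ∀ i, h (S i).1 = (S i).2

/-- A dataset `S` is realizable by the concept class `H` if some hypothesis in `H` is
consistent with it. -/
def Realizable (H : Set (X → Bool)) {m : ℕ} (S : Fin m → X × Bool) : Prop :=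
  ∃ h ∈ H, Consistent h S

/-- Two datasets contradict each other if there is a point `x` such that one of them contains
the labeled example `(x, 0)` and the other contains `(x, 1)`. -/
def Contradicts {m : ℕ} (S S' : Fin m → X × Bool) : Prop :=
  ∃ x : X, ((∃ i, S i = (x, false)) ∧ (∃ j, S' j = (x, true))) ∨
    ((∃ i, S i = (x, true)) ∧ (∃ j, S' j = (x, false)))

/-- The vertex set of the contradiction graph `G_m(H)`: all `H`-realizable datasets of
size `m`. -/
abbrev Vm (H : Set (X → Bool)) (m : ℕ) : Type _ :=
  {S : Fin m → X × Bool // Realizable H S}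

/-- A clique in the contradiction graph `G_m(H)`: a set of vertices every two distinct members
of which contradict each other. -/
def IsClique (H : Set (X → Bool)) (m : ℕ) (C : Set (Vm H m)) : Prop :=
  ∀ S ∈ C, ∀ S' ∈ C, S ≠ S' → Contradicts S.1 S'.1

/-- An independent set in the contradiction graph `G_m(H)`: a set of vertices no two of which
are adjacent (i.e. no two distinct members contradict each other). -/
def IsIndep (H : Set (X → Bool)) (m : ℕ) (I : Set (Vm H m)) : Prop :=
  ∀ S ∈ I, ∀ S' ∈ I, S ≠ S' → ¬ Contradicts S.1 S'.1

/-- The clique number `ω_m` of `G_m(H)`: the supremum of the sizes of cliques (in `ℕ∞`). -/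
noncomputable def cliqueNum (H : Set (X → Bool)) (m : ℕ) : ℕ∞ :=
  ⨆ (C : Set (Vm H m)) (_ : IsClique H m C), C.encard

/-- The clique dimension `CD(H) = sup { m : ω_m = 2^m } ∈ ℕ ∪ {∞}`. -/
noncomputable def cliqueDim (H : Set (X → Bool)) : ℕ∞ :=
  ⨆ (m : ℕ) (_ : cliqueNum H m = 2 ^ m), (m : ℕ∞)

/-- A fractional clique of `G_m(H)`: a nonnegative weight function on the vertices such that
the total weight of every independent set is at most `1`. -/
def IsFracClique (H : Set (X → Bool)) (m : ℕ) (δ : Vm H m → ℝ≥0∞) : Prop :=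
  ∀ I : Set (Vm H m), IsIndep H m I → ∑' S : I, δ S.1 ≤ 1

/-- The fractional clique number `ω*_m` of `G_m(H)`: the supremum of the sizes
`|δ| = Σ_S δ(S)` of fractional cliques. -/
noncomputable def fracCliqueNum (H : Set (X → Bool)) (m : ℕ) : ℝ≥0∞ :=
  ⨆ (δ : Vm H m → ℝ≥0∞) (_ : IsFracClique H m δ), ∑' S, δ S

/-- The fractional clique dimension `CD*(H) = sup { m : ω*_m = 2^m } ∈ ℕ ∪ {∞}`. -/
noncomputable def fracCliqueDim (H : Set (X → Bool)) : ℕ∞ :=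
  ⨆ (m : ℕ) (_ : fracCliqueNum H m = 2 ^ m), (m : ℕ∞)

end ContradictionGraph

namespace ContradictionGraph
variable {X : Type*}

/-- `H` shatters a mistake tree of depth `d`: there is an assignment of points of `X` to the
internal nodes of the complete binary tree of depth `d` (the point fed to branch `ε` at level
`i` depends only on the first `i` bits of `ε`) such that every root-to-leaf dataset is
realizable by `H`. -/
def ShattersTree (H : Set (X → Bool)) (d : ℕ) : Prop :=
  ∃ t : (Fin d → Bool) → Fin d → X,
    (∀ ε ε' : Fin d → Bool, ∀ i : Fin d, (∀ j : Fin d, j < i → ε j = ε' j) → t ε i = t ε' i) ∧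
    ∀ ε : Fin d → Bool, Realizable H (fun i => (t ε i, ε i))

/-- The Littlestone dimension `LD(H)`: the largest `d` such that `H` shatters a mistake tree of
depth `d` (equal to `∞` if `H` shatters arbitrarily deep trees). -/
noncomputable def littlestoneDim (H : Set (X → Bool)) : ℕ∞ :=
  ⨆ (d : ℕ) (_ : ShattersTree H d), (d : ℕ∞)

end ContradictionGraph

namespace ContradictionGraph

section Aux

open Finset

variable {X : Type*} [DecidableEq X] {m : ℕ}

private lemma sum_card_le (F : Finset (Fin m → X × Bool)) (P : Finset X) :
    ∑ x ∈ P, ((F.filter fun S => ∃ j, S j = (x, false)).card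
        + (F.filter fun S => ∃ j, S j = (x, true)).card) ≤ m * F.card := by
  have key : ∀ S : Fin m → X × Bool,
      (P.filter fun x => ∃ j, S j = (x, false)).card
        + (P.filter fun x => ∃ j, S j = (x, true)).card ≤ m := by
    intro S
    have h1 : ∀ b : Bool, (P.filter fun x => ∃ j, S j = (x, b)).card
        ≤ (Finset.univ.filter fun j => (S j).2 = b).card := by
      intro b
      calc (P.filter fun x => ∃ j, S j = (x, b)).card
          ≤ ((Finset.univ.filter fun j => (S j).2 = b).image fun j => (S j).1).card := by
            apply Finset.card_le_card
            intro x hx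
            simp only [Finset.mem_filter, Finset.mem_image, Finset.mem_univ, true_and] at hx ⊢
            obtain ⟨-, j, hj⟩ := hx
            exact ⟨j, by rw [hj], by rw [hj]⟩
        _ ≤ _ := Finset.card_image_le
    have h2 : (Finset.univ.filter fun j => (S j).2 = false).card
        + (Finset.univ.filter fun j => (S j).2 = true).card = m := by
      have h3 : (Finset.univ.filter fun j => ¬ ((S j).2 = false)) =
          (Finset.univ.filter fun j => (S j).2 = true) := by
        apply Finset.filter_congr
        intro j _
        simp
      have h4 := Finset.card_filter_add_card_filter_not
        (s := (Finset.univ : Finset (Fin m))) (p := fun j => (S j).2 = false)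
      rw [h3] at h4
      simpa using h4
    have := h1 false
    have := h1 true
    omega
  have swap : ∀ b : Bool, ∑ x ∈ P, (F.filter fun S => ∃ j, S j = (x, b)).card
      = ∑ S ∈ F, (P.filter fun x => ∃ j, S j = (x, b)).card := by
    intro b
    simp only [Finset.card_filter]
    exact Finset.sum_comm
  calc ∑ x ∈ P, ((F.filter fun S => ∃ j, S j = (x, false)).card
        + (F.filter fun S => ∃ j, S j = (x, true)).card)
      = ∑ S ∈ F, ((P.filter fun x => ∃ j, S j = (x, false)).card
        + (P.filter fun x => ∃ j, S j = (x, true)).card) := by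
        rw [Finset.sum_add_distrib, swap false, swap true, ← Finset.sum_add_distrib]
    _ ≤ ∑ _S ∈ F, m := Finset.sum_le_sum fun S _ => key S
    _ = m * F.card := by rw [Finset.sum_const, smul_eq_mul, Nat.mul_comm]

private lemma exists_split (F : Finset (Fin m → X × Bool)) (t : ℕ)
    (hcon : ∀ S ∈ F, ∀ S' ∈ F, S ≠ S' → Contradicts S S')
    (hcard : 2 * m * t + 1 < F.card) :
    ∃ x : X, t + 1 ≤ (F.filter fun S => ∃ j, S j = (x, false)).card ∧
      t + 1 ≤ (F.filter fun S => ∃ j, S j = (x, true)).card := by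
  by_contra hno
  push_neg at hno
  set P : Finset X := F.biUnion (fun S => Finset.image (fun j => (S j).1) Finset.univ) with hP
  have hmin : ∀ x : X, (F.filter fun S => ∃ j, S j = (x, false)).card
      * (F.filter fun S => ∃ j, S j = (x, true)).card
      ≤ t * ((F.filter fun S => ∃ j, S j = (x, false)).card
        + (F.filter fun S => ∃ j, S j = (x, true)).card) := by
    intro x
    rcases le_or_gt (F.filter fun S => ∃ j, S j = (x, false)).card t with h | h
    · exact le_trans (Nat.mul_le_mul_right _ h)
        (Nat.mul_le_mul_left _ (Nat.le_add_left _ _))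
    · have hb' : (F.filter fun S => ∃ j, S j = (x, true)).card ≤ t :=
        Nat.lt_succ_iff.mp (hno x h)
      calc (F.filter fun S => ∃ j, S j = (x, false)).card
            * (F.filter fun S => ∃ j, S j = (x, true)).card
          ≤ (F.filter fun S => ∃ j, S j = (x, false)).card * t :=
            Nat.mul_le_mul_left _ hb'
        _ = t * (F.filter fun S => ∃ j, S j = (x, false)).card := Nat.mul_comm _ _
        _ ≤ _ := Nat.mul_le_mul_left _ (Nat.le_add_right _ _)
  have hsub : F.offDiag ⊆ P.biUnion (fun x =>
      ((F.filter fun S => ∃ j, S j = (x, false)) ×ˢ (F.filter fun S => ∃ j, S j = (x, true)))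
      ∪ ((F.filter fun S => ∃ j, S j = (x, true)) ×ˢ
          (F.filter fun S => ∃ j, S j = (x, false)))) := by
    rintro ⟨S, S'⟩ hmem
    rw [Finset.mem_offDiag] at hmem
    obtain ⟨hS, hS', hne⟩ := hmem
    obtain ⟨x, hcase⟩ := hcon S hS S' hS' hne
    have hxP : x ∈ P := by
      rcases hcase with ⟨⟨i, hi⟩, _⟩ | ⟨⟨i, hi⟩, _⟩ <;>
        · refine Finset.mem_biUnion.mpr ⟨S, hS, Finset.mem_image.mpr ⟨i, Finset.mem_univ _, ?_⟩⟩
          rw [hi]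
    refine Finset.mem_biUnion.mpr ⟨x, hxP, ?_⟩
    rcases hcase with ⟨h1, h2⟩ | ⟨h1, h2⟩
    · exact Finset.mem_union_left _ (Finset.mem_product.mpr
        ⟨Finset.mem_filter.mpr ⟨hS, h1⟩, Finset.mem_filter.mpr ⟨hS', h2⟩⟩)
    · exact Finset.mem_union_right _ (Finset.mem_product.mpr
        ⟨Finset.mem_filter.mpr ⟨hS, h1⟩, Finset.mem_filter.mpr ⟨hS', h2⟩⟩)
  have h1 : F.card * F.card - F.card ≤ ∑ x ∈ P,
      2 * ((F.filter fun S => ∃ j, S j = (x, false)).card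
        * (F.filter fun S => ∃ j, S j = (x, true)).card) := by
    calc F.card * F.card - F.card = F.offDiag.card := (Finset.offDiag_card F).symm
      _ ≤ _ := Finset.card_le_card hsub
      _ ≤ ∑ x ∈ P, (((F.filter fun S => ∃ j, S j = (x, false))
            ×ˢ (F.filter fun S => ∃ j, S j = (x, true)))
          ∪ ((F.filter fun S => ∃ j, S j = (x, true)) ×ˢ
            (F.filter fun S => ∃ j, S j = (x, false)))).card := Finset.card_biUnion_le
      _ ≤ _ := Finset.sum_le_sum fun x _ => by
          refine le_trans (Finset.card_union_le _ _) (le_of_eq ?_)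
          rw [Finset.card_product, Finset.card_product]
          ring
  have h2 := sum_card_le F P
  have h3 : ∑ x ∈ P, 2 * ((F.filter fun S => ∃ j, S j = (x, false)).card
      * (F.filter fun S => ∃ j, S j = (x, true)).card) ≤ 2 * t * (m * F.card) := by
    calc ∑ x ∈ P, 2 * ((F.filter fun S => ∃ j, S j = (x, false)).card
          * (F.filter fun S => ∃ j, S j = (x, true)).card)
        ≤ ∑ x ∈ P, 2 * t * ((F.filter fun S => ∃ j, S j = (x, false)).card
          + (F.filter fun S => ∃ j, S j = (x, true)).card) :=
          Finset.sum_le_sum fun x _ => by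
            rw [Nat.mul_assoc]
            exact Nat.mul_le_mul_left _ (hmin x)
      _ = 2 * t * ∑ x ∈ P, ((F.filter fun S => ∃ j, S j = (x, false)).card
          + (F.filter fun S => ∃ j, S j = (x, true)).card) := by
            rw [← Finset.mul_sum]
      _ ≤ 2 * t * (m * F.card) := Nat.mul_le_mul_left (2 * t) h2
  have hNN : F.card * F.card ≤ 2 * t * (m * F.card) + F.card :=
    Nat.sub_le_iff_le_add.mp (le_trans h1 h3)
  obtain ⟨N, hN⟩ : ∃ N, F.card = N := ⟨_, rfl⟩
  rw [hN] at hNN hcard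
  have hgt : (2 * m * t + 2) * N ≤ N * N := Nat.mul_le_mul_right _ hcard
  nlinarith [hNN, hgt, hcard]

private lemma exists_tree (hm : 0 < m) :
    ∀ (k : ℕ) (F : Finset (Fin m → X × Bool)),
      (∀ S ∈ F, ∀ S' ∈ F, S ≠ S' → Contradicts S S') →
      (2 * m + 1) ^ k ≤ F.card →
      ∃ t : (Fin k → Bool) → Fin k → X,
        (∀ ε ε' : Fin k → Bool, ∀ i : Fin k,
          (∀ j : Fin k, j < i → ε j = ε' j) → t ε i = t ε' i) ∧
        ∀ ε : Fin k → Bool, ∃ S ∈ F, ∀ i : Fin k, ∃ j, S j = (t ε i, ε i) := by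
  intro k
  induction k with
  | zero =>
    intro F _ hcard
    have hpos : 0 < F.card := lt_of_lt_of_le (by norm_num) hcard
    obtain ⟨S, hS⟩ := Finset.card_pos.mp hpos
    exact ⟨fun _ => Fin.elim0, fun _ _ i => i.elim0,
      fun ε => ⟨S, hS, fun i => i.elim0⟩⟩
  | succ k ih =>
    intro F hcon hcard
    obtain ⟨q, hq⟩ : ∃ q, (2 * m + 1) ^ k = q + 1 :=
      ⟨(2 * m + 1) ^ k - 1, by
        have : 0 < (2 * m + 1) ^ k := Nat.pow_pos (by omega)
        omega⟩
    have hcard' : 2 * m * q + 1 < F.card := by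
      have hpow : (2 * m + 1) ^ (k + 1) = (q + 1) * (2 * m + 1) := by
        rw [pow_succ, hq]
      nlinarith [hcard, hpow, hm]
    obtain ⟨x, h0, h1⟩ := exists_split F q hcon hcard'
    rw [← hq] at h0 h1
    have hcon0 : ∀ S ∈ F.filter fun S => ∃ j, S j = (x, false),
        ∀ S' ∈ F.filter fun S => ∃ j, S j = (x, false), S ≠ S' → Contradicts S S' :=
      fun S hS S' hS' => hcon S (Finset.filter_subset _ _ hS) S' (Finset.filter_subset _ _ hS')
    have hcon1 : ∀ S ∈ F.filter fun S => ∃ j, S j = (x, true),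
        ∀ S' ∈ F.filter fun S => ∃ j, S j = (x, true), S ≠ S' → Contradicts S S' :=
      fun S hS S' hS' => hcon S (Finset.filter_subset _ _ hS) S' (Finset.filter_subset _ _ hS')
    obtain ⟨t0, hp0, hl0⟩ := ih _ hcon0 h0
    obtain ⟨t1, hp1, hl1⟩ := ih _ hcon1 h1
    refine ⟨fun ε => Fin.cons x (cond (ε 0) t1 t0 (fun i => ε i.succ)), ?_, ?_⟩
    · intro ε ε' i hagree
      induction i using Fin.cases with
      | zero => simp
      | succ i' =>
        have hε0 : ε 0 = ε' 0 := hagree 0 (Fin.succ_pos i')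
        simp only [Fin.cons_succ]
        rw [← hε0]
        have hrec : ∀ j : Fin k, j < i' → ε j.succ = ε' j.succ := by
          intro j hj
          exact hagree j.succ (by simpa using hj)
        cases hb : ε 0 with
        | false => exact hp0 _ _ i' hrec
        | true => exact hp1 _ _ i' hrec
    · intro ε
      cases hb : ε 0 with
      | false =>
        obtain ⟨S, hSmem, hSl⟩ := hl0 (fun i => ε i.succ)
        rw [Finset.mem_filter] at hSmem
        refine ⟨S, hSmem.1, ?_⟩
        intro i
        induction i using Fin.cases with
        | zero => simpa [hb] using hSmem.2
        | succ i' => simpa [hb] using hSl i'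
      | true =>
        obtain ⟨S, hSmem, hSl⟩ := hl1 (fun i => ε i.succ)
        rw [Finset.mem_filter] at hSmem
        refine ⟨S, hSmem.1, ?_⟩
        intro i
        induction i using Fin.cases with
        | zero => simpa [hb] using hSmem.2
        | succ i' => simpa [hb] using hSl i'

private lemma log_le_aux (x a : ℝ) (hx : 0 < x) (ha : 0 < a) :
    Real.log x ≤ x / a + Real.log a - 1 := by
  have h := Real.log_le_sub_one_of_pos (x := x / a) (by positivity)
  have h2 : Real.log (x / a) = Real.log x - Real.log a :=
    Real.log_div (ne_of_gt hx) (ne_of_gt ha)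
  linarith

private lemma numeric_bound (m d : ℕ) (hm : 301 ≤ m)
    (hmd : 2 * (d : ℝ) * Real.logb 2 d < (m : ℝ))
    (hlt : 2 ^ m < (2 * m + 1) ^ (d + 1)) : False := by
  have hM : (301 : ℝ) ≤ (m : ℝ) := by exact_mod_cast hm
  have l2pos : 0 < Real.log 2 := Real.log_pos one_lt_two
  have l2lb : 0.6931471803 < Real.log 2 := Real.log_two_gt_d9
  have l2ub : Real.log 2 < 0.6931471808 := Real.log_two_lt_d9
  have hR : (2 : ℝ) ^ m < (2 * (m : ℝ) + 1) ^ (d + 1) := by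
    exact_mod_cast hlt
  have key : (m : ℝ) < ((d : ℝ) + 1) * Real.logb 2 (2 * (m : ℝ) + 1) := by
    have h1 : Real.logb 2 ((2 : ℝ) ^ m) < Real.logb 2 ((2 * (m : ℝ) + 1) ^ (d + 1)) :=
      Real.logb_lt_logb one_lt_two (by positivity) hR
    rw [Real.logb_pow, Real.logb_pow, Real.logb_self_eq_one (by norm_num)] at h1
    push_cast at h1
    linarith
  have hub : ((d : ℝ) + 1) * Real.logb 2 (2 * (m : ℝ) + 1) ≤ (m : ℝ) := by
    have h2M : (1 : ℝ) < 2 * (m : ℝ) + 1 := by linarith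
    rcases le_or_gt d 31 with hd | hd
    · -- small d: use (d+1) ≤ 32
      have hd32 : ((d : ℝ) + 1) ≤ 32 := by
        have : (d : ℝ) ≤ 31 := by exact_mod_cast hd
        linarith
      have hlognn : 0 ≤ Real.logb 2 (2 * (m : ℝ) + 1) :=
        Real.logb_nonneg one_lt_two (by linarith)
      have hmain : 32 * Real.logb 2 (2 * (m : ℝ) + 1) ≤ (m : ℝ) := by
        have hlog : Real.log (2 * (m : ℝ) + 1) ≤ (2 * (m : ℝ) + 1) / 512 + Real.log 512 - 1 :=
          log_le_aux _ _ (by linarith) (by norm_num)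
        have h512 : Real.log 512 = 9 * Real.log 2 := by
          rw [show (512 : ℝ) = 2 ^ (9 : ℕ) by norm_num, Real.log_pow]
          push_cast; ring
        rw [Real.logb, ← mul_div_assoc, div_le_iff₀ l2pos]
        have p0 : (0 : ℝ) ≤ ((m : ℝ) - 301) * (Real.log 2 - 0.6931471803) :=
          mul_nonneg (by linarith) (by linarith)
        nlinarith [hlog, h512, p0]
      calc ((d : ℝ) + 1) * Real.logb 2 (2 * (m : ℝ) + 1)
          ≤ 32 * Real.logb 2 (2 * (m : ℝ) + 1) :=
            mul_le_mul_of_nonneg_right hd32 hlognn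
        _ ≤ (m : ℝ) := hmain
    · -- large d
      have hD : (32 : ℝ) ≤ (d : ℝ) := by exact_mod_cast hd
      have hc5 : (5 : ℝ) ≤ Real.logb 2 (d : ℝ) := by
        have h32 : Real.logb 2 (32 : ℝ) = 5 := by
          rw [show (32 : ℝ) = 2 ^ (5 : ℕ) by norm_num, Real.logb_pow,
            Real.logb_self_eq_one (by norm_num : (1 : ℝ) < 2)]
          push_cast; ring
        rw [← h32]
        exact Real.logb_le_logb_of_le one_lt_two (by norm_num) hD
      have hM2dc : 2 * (d : ℝ) * Real.logb 2 (d : ℝ) < (m : ℝ) := hmd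
      have hDpos : (0 : ℝ) < 16 * (d : ℝ) := by linarith
      have hlog : Real.log (2 * (m : ℝ) + 1)
          ≤ (2 * (m : ℝ) + 1) / (16 * (d : ℝ)) + Real.log (16 * (d : ℝ)) - 1 :=
        log_le_aux _ _ (by linarith) hDpos
      have h16D : Real.log (16 * (d : ℝ)) = 4 * Real.log 2 + Real.log (d : ℝ) := by
        rw [Real.log_mul (by norm_num) (by linarith), show (16 : ℝ) = 2 ^ (4 : ℕ) by norm_num,
          Real.log_pow]
        push_cast; ring
      have hlogD : Real.log (d : ℝ) = Real.logb 2 (d : ℝ) * Real.log 2 := by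
        rw [Real.logb, div_mul_cancel₀]
        exact ne_of_gt l2pos
      rw [h16D, hlogD] at hlog
      have hdiv : ((d : ℝ) + 1) * ((2 * (m : ℝ) + 1) / (16 * (d : ℝ)))
          ≤ (33 / 512) * (2 * (m : ℝ) + 1) := by
        rw [mul_div_assoc', div_le_iff₀ hDpos]
        nlinarith [mul_nonneg (by linarith : (0 : ℝ) ≤ 2 * (m : ℝ) + 1)
          (by linarith : (0 : ℝ) ≤ (d : ℝ) - 32)]
      have hbig : ((d : ℝ) + 1) * Real.log (2 * (m : ℝ) + 1)
          ≤ ((d : ℝ) + 1) * ((2 * (m : ℝ) + 1) / (16 * (d : ℝ)))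
            + ((d : ℝ) + 1) * (4 * Real.log 2 + Real.logb 2 (d : ℝ) * Real.log 2 - 1) := by
        have h := mul_le_mul_of_nonneg_left hlog (by linarith : (0 : ℝ) ≤ (d : ℝ) + 1)
        nlinarith [h]
      rw [Real.logb, ← mul_div_assoc, div_le_iff₀ l2pos]
      have hc0 : (0 : ℝ) ≤ Real.logb 2 (d : ℝ) := by linarith
      have p1 : (m : ℝ) * 0.6931471803 ≤ (m : ℝ) * Real.log 2 :=
        mul_le_mul_of_nonneg_left l2lb.le (by linarith)
      have p2 : ((d : ℝ) + 1) * Real.logb 2 (d : ℝ) * Real.log 2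
          ≤ ((d : ℝ) + 1) * Real.logb 2 (d : ℝ) * 0.6931471808 :=
        mul_le_mul_of_nonneg_left l2ub.le
          (mul_nonneg (by linarith) hc0)
      have p3 : ((d : ℝ) + 1) * Real.log 2 ≤ ((d : ℝ) + 1) * 0.6931471808 :=
        mul_le_mul_of_nonneg_left l2ub.le (by linarith)
      have p4 : (0 : ℝ) ≤ ((d : ℝ) - 32) * (Real.logb 2 (d : ℝ) - 5) :=
        mul_nonneg (by linarith) (by linarith)
      linarith [hbig, hdiv, hM2dc, hc5, hD, hM, p1, p2, p3, p4]

  linarith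

end Aux

/-- If `H` has finite Littlestone dimension `d = LD(H)`, then the clique
dimension satisfies `CD(H) ≤ max {2·d·log₂ d, 300}`; i.e., every `m` with `ω_m = 2^m`
satisfies `m ≤ max {2·d·log₂ d, 300}`. -/
theorem cliqueDim_le_of_littlestoneDim {X : Type*} [Countable X]
    (H : Set (X → Bool)) (hH : H.Nonempty) (d : ℕ)
    (hLD : littlestoneDim H = (d : ℕ∞)) :
    ∀ m : ℕ, cliqueNum H m = 2 ^ m →
      (m : ℝ) ≤ max (2 * d * Real.logb 2 d) 300 := by
  classical
  intro m hm
  by_contra hcontra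
  push_neg at hcontra
  rw [max_lt_iff] at hcontra
  obtain ⟨hmd, h300⟩ := hcontra
  have hm301 : 301 ≤ m := by
    have h' : (300 : ℕ) < m := by exact_mod_cast h300
    omega
  have hmpos : 0 < m := by omega
  have hcast : (2 : ℕ∞) ^ m = ((2 ^ m : ℕ) : ℕ∞) := by push_cast; rfl
  have hlt1 : ((2 ^ m - 1 : ℕ) : ℕ∞) < cliqueNum H m := by
    rw [hm, hcast]
    exact_mod_cast Nat.sub_lt (Nat.pow_pos (by norm_num)) one_pos
  rw [cliqueNum] at hlt1
  obtain ⟨C, hC⟩ := lt_iSup_iff.mp hlt1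
  obtain ⟨hclq, hlt2⟩ := lt_iSup_iff.mp hC
  have hge : ((2 ^ m : ℕ) : ℕ∞) ≤ C.encard := by
    have h1 : ((2 ^ m - 1 : ℕ) : ℕ∞) + 1 ≤ C.encard := Order.add_one_le_of_lt hlt2
    have h2 : ((2 ^ m - 1 : ℕ) : ℕ∞) + 1 = ((2 ^ m : ℕ) : ℕ∞) := by
      have h3 : 2 ^ m - 1 + 1 = 2 ^ m :=
        Nat.succ_pred_eq_of_pos (Nat.pow_pos (by norm_num))
      exact_mod_cast h3
    rwa [h2] at h1
  obtain ⟨D, hDC, hDcard⟩ := Set.exists_subset_encard_eq hge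
  have hDfin : D.Finite := Set.finite_of_encard_eq_coe hDcard
  set F : Finset (Fin m → X × Bool) := hDfin.toFinset.image (fun v => v.1) with hF
  have hFcard : F.card = 2 ^ m := by
    rw [hF, Finset.card_image_of_injective _ Subtype.val_injective]
    have h4 := hDfin.encard_eq_coe_toFinset_card
    rw [hDcard] at h4
    exact_mod_cast h4.symm
  have hmemC : ∀ v : Vm H m, v ∈ hDfin.toFinset → v ∈ C := fun v hv =>
    hDC (hDfin.mem_toFinset.mp hv)
  have hFcon : ∀ S ∈ F, ∀ S' ∈ F, S ≠ S' → Contradicts S S' := by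
    intro S hS S' hS' hne
    rw [hF, Finset.mem_image] at hS hS'
    obtain ⟨v, hv, rfl⟩ := hS
    obtain ⟨v', hv', rfl⟩ := hS'
    exact hclq v (hmemC v hv) v' (hmemC v' hv') (fun h => hne (by rw [h]))
  have hFreal : ∀ S ∈ F, Realizable H S := by
    intro S hS
    rw [hF, Finset.mem_image] at hS
    obtain ⟨v, hv, rfl⟩ := hS
    exact v.2
  have hshat : ¬ ShattersTree H (d + 1) := by
    intro hs
    have h1 : ((d + 1 : ℕ) : ℕ∞) ≤ littlestoneDim H := by
      rw [littlestoneDim]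
      exact le_iSup₂_of_le (d + 1) hs le_rfl
    rw [hLD] at h1
    have h5 : d + 1 ≤ d := by exact_mod_cast h1
    omega
  have hsize : ¬ ((2 * m + 1) ^ (d + 1) ≤ F.card) := by
    intro hle
    obtain ⟨t, hpre, hleaf⟩ := exists_tree hmpos (d + 1) F hFcon hle
    refine hshat ⟨t, hpre, fun ε => ?_⟩
    obtain ⟨S, hSF, hSw⟩ := hleaf ε
    obtain ⟨h, hHh, hcons⟩ := hFreal S hSF
    refine ⟨h, hHh, fun i => ?_⟩
    obtain ⟨j, hj⟩ := hSw i
    have h6 := hcons j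
    rw [hj] at h6
    exact h6
  rw [hFcard] at hsize
  exact numeric_bound m d hm301 hmd (by omega)

end ContradictionGraph
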